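/- Let G be a locally compact group and H a closed normal subgroup of G. Then min{c_ub(G/H), c_ub(H)} ≤ c_ub(G) ≤ c_ub(G/H), where H carries the subspace topology and G/H the quotient topology. -/

import Mathlib

open scoped ENNReal
open MeasureTheory

structure HilbRep (G : Type*) [Group G] [TopologicalSpace G] where
  (space : Type*)
  [normedAddCommGroup : NormedAddCommGroup space]
  [innerProductSpace : InnerProductSpace ℂ space]
  [completeSpace : CompleteSpace space]
  toFun : G →* (space →L[ℂ] space)ˣ

attribute [instance] HilbRep.normedAddCommGroup HilbRep.innerProductSpace HilbRep.completeSpace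

namespace HilbRep

variable {G : Type*} [Group G] [TopologicalSpace G]

/-- The bounded invertible operator associated to a group element. -/
def op (π : HilbRep G) (s : G) : π.space →L[ℂ] π.space :=
  (π.toFun s : π.space →L[ℂ] π.space)

/-- The representation is uniformly bounded by `c`. -/
def IsUB (π : HilbRep G) (c : ℝ) : Prop := ∀ s : G, ‖π.op s‖ ≤ c

/-- The representation is continuous for the strong operator topology. -/
def IsSOTContinuous (π : HilbRep G) : Prop :=
  ∀ ξ : π.space, Continuous fun s : G => π.op s ξ

/-- `π ∈ R_c(G)`: strongly continuous and uniformly bounded by `c`. -/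
def IsRc (π : HilbRep G) (c : ℝ) : Prop := π.IsUB c ∧ π.IsSOTContinuous

/-- `π` almost has invariant vectors. -/
def AlmostInvariantVectors (π : HilbRep G) : Prop :=
  ∀ Q : Set G, IsCompact Q → ∀ ε : ℝ, 0 < ε →
    ∃ ξ : π.space, ∀ s ∈ Q, ‖π.op s ξ - ξ‖ < ε * ‖ξ‖

/-- `π` has a nonzero invariant vector. -/
def HasInvariantVector (π : HilbRep G) : Prop :=
  ∃ ξ : π.space, ξ ≠ 0 ∧ ∀ s : G, π.op s ξ = ξ

end HilbRep

universe u v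

/-- Property (T)_c. -/
def HasPropertyT (G : Type u) [Group G] [TopologicalSpace G] (c : ℝ) : Prop :=
  ∀ π : HilbRep.{u, v} G, π.IsRc c → π.AlmostInvariantVectors → π.HasInvariantVector

open Classical in
/-- The constant `c_ub(G) ∈ [1, ∞]`. -/
noncomputable def cUB (G : Type u) [Group G] [TopologicalSpace G] : ℝ≥0∞ :=
  if HasPropertyT.{u, v} G 1 then
    ⨆ (c : ℝ) (_ : 1 ≤ c ∧ HasPropertyT.{u, v} G c), ENNReal.ofReal c
  else 1

/-! ### Auxiliary development -/

namespace CUBAux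

open HilbRep

variable {G : Type u} [Group G] [TopologicalSpace G]

theorem op_mul_apply (π : HilbRep G) (s t : G) (x : π.space) :
    π.op (s * t) x = π.op s (π.op t x) := by
  simp only [HilbRep.op, map_mul, Units.val_mul, ContinuousLinearMap.mul_apply]

theorem op_one_apply (π : HilbRep G) (x : π.space) : π.op 1 x = x := by
  simp only [HilbRep.op, map_one, Units.val_one, ContinuousLinearMap.one_apply]

theorem op_inv_apply (π : HilbRep G) (s : G) (x : π.space) : π.op s (π.op s⁻¹ x) = x := by
  rw [← op_mul_apply, mul_inv_cancel, op_one_apply]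

theorem op_inv_apply' (π : HilbRep G) (s : G) (x : π.space) : π.op s⁻¹ (π.op s x) = x := by
  rw [← op_mul_apply, inv_mul_cancel, op_one_apply]

/-- Pull back a representation of the quotient group along the projection. -/
def pullback (H : Subgroup G) [H.Normal] (ρ : HilbRep.{u, v} (G ⧸ H)) : HilbRep.{u, v} G where
  space := ρ.space
  toFun := ρ.toFun.comp (QuotientGroup.mk' H)

theorem pullback_op (H : Subgroup G) [H.Normal] (ρ : HilbRep.{u, v} (G ⧸ H)) (s : G) :
    (pullback H ρ).op s = ρ.op (QuotientGroup.mk s) := rfl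

/-- Property (T)_c passes to quotients. -/
theorem propertyT_quotient (H : Subgroup G) [H.Normal] {c : ℝ}
    (hT : HasPropertyT.{u, v} G c) : HasPropertyT.{u, v} (G ⧸ H) c := by
  intro ρ hRc hAlm
  have hRcπ : (pullback H ρ).IsRc c :=
    ⟨fun s => hRc.1 _, fun ξ => (hRc.2 ξ).comp QuotientGroup.continuous_mk⟩
  have hAlmπ : (pullback H ρ).AlmostInvariantVectors := by
    intro Q hQ ε hε
    obtain ⟨ξ, hξ⟩ := hAlm (QuotientGroup.mk '' Q) (hQ.image QuotientGroup.continuous_mk) ε hε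
    exact ⟨ξ, fun s hs => hξ _ ⟨s, hs, rfl⟩⟩
  obtain ⟨ξ, hξ0, hξ⟩ := hT (pullback H ρ) hRcπ hAlmπ
  refine ⟨ξ, hξ0, fun t => ?_⟩
  obtain ⟨s, rfl⟩ := QuotientGroup.mk_surjective t
  exact hξ s

/-- Compact subsets of the quotient of a locally compact group lift to compact sets. -/
theorem exists_isCompact_subset_image [IsTopologicalGroup G] [LocallyCompactSpace G]
    (H : Subgroup G) {K : Set (G ⧸ H)} (hK : IsCompact K) :
    ∃ Q : Set G, IsCompact Q ∧ K ⊆ QuotientGroup.mk '' Q := by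
  choose g hg using QuotientGroup.mk_surjective (s := H)
  choose C hC hCn using fun s : G => exists_compact_mem_nhds s
  obtain ⟨t, -, ht⟩ := hK.elim_nhds_subcover (fun x => QuotientGroup.mk '' C (g x))
    (fun x _ => by
      have := (QuotientGroup.isOpenMap_coe (N := H)).image_mem_nhds (hCn (g x))
      rwa [hg x] at this)
  refine ⟨⋃ x ∈ t, C (g x), t.finite_toSet.isCompact_biUnion fun x _ => hC _, ?_⟩
  refine ht.trans ?_
  rw [Set.image_iUnion₂]

section Fixed

variable (π : HilbRep.{u, v} G) (H : Subgroup G)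

/-- The subspace of `H`-fixed vectors. -/
def fixV : Submodule ℂ π.space where
  carrier := {x | ∀ h ∈ H, π.op h x = x}
  add_mem' := fun ha hb h hh => by rw [map_add, ha h hh, hb h hh]
  zero_mem' := fun h _ => map_zero _
  smul_mem' := fun c x hx h hh => by rw [ContinuousLinearMap.map_smul, hx h hh]

theorem mem_fixV {x : π.space} : x ∈ fixV π H ↔ ∀ h ∈ H, π.op h x = x := Iff.rfl

theorem isClosed_fixV : IsClosed (fixV π H : Set π.space) := by
  have : (fixV π H : Set π.space) = ⋂ h ∈ (H : Set G), {x | π.op h x = x} := by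
    ext x
    simp only [SetLike.mem_coe, mem_fixV, Set.mem_iInter, Set.mem_setOf_eq, SetLike.mem_coe]
  rw [this]
  exact isClosed_biInter fun h _ => isClosed_eq (π.op h).continuous continuous_id

instance : CompleteSpace ↥(fixV π H) := (isClosed_fixV π H).completeSpace_coe

instance : CompleteSpace ↥(fixV π H)ᗮ := (fixV π H).isClosed_orthogonal.completeSpace_coe

theorem opV_mem [H.Normal] (s : G) {x : π.space} (hx : x ∈ fixV π H) :
    π.op s x ∈ fixV π H := by
  intro h hh
  have hh' : s⁻¹ * h * s ∈ H := by
    have := Subgroup.Normal.conj_mem ‹H.Normal› h hh s⁻¹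
    simpa using this
  have hhs : h * s = s * (s⁻¹ * h * s) := by group
  rw [← op_mul_apply, hhs, op_mul_apply, hx _ hh']

/-- The restriction of `π.op s` to the fixed subspace. -/
noncomputable def Lop [H.Normal] (s : G) : ↥(fixV π H) →L[ℂ] ↥(fixV π H) :=
  ((π.op s).comp (fixV π H).subtypeL).codRestrict _ fun v => opV_mem π H s v.2

@[simp] theorem Lop_apply [H.Normal] (s : G) (v : ↥(fixV π H)) :
    (Lop π H s v : π.space) = π.op s ↑v := rfl

/-- The restricted representation of `G` on the fixed subspace, as a homomorphism to units. -/
noncomputable def resHom [H.Normal] : G →* (↥(fixV π H) →L[ℂ] ↥(fixV π H))ˣ where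
  toFun s :=
    { val := Lop π H s
      inv := Lop π H s⁻¹
      val_inv := by
        ext v
        simp [ContinuousLinearMap.mul_apply, op_inv_apply]
      inv_val := by
        ext v
        simp [ContinuousLinearMap.mul_apply, op_inv_apply'] }
  map_one' := Units.ext (by
    ext v
    simp [op_one_apply])
  map_mul' s t := Units.ext (by
    ext v
    simp [ContinuousLinearMap.mul_apply, op_mul_apply])

/-- The induced representation of `G ⧸ H` on the `H`-fixed subspace. -/
noncomputable def quotRep [H.Normal] : HilbRep.{u, v} (G ⧸ H) where
  space := ↥(fixV π H)
  toFun := QuotientGroup.lift H (resHom π H) (fun h hh => by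
    rw [MonoidHom.mem_ker]
    refine Units.ext ?_
    ext v
    exact v.2 h hh)

@[simp] theorem quotRep_op [H.Normal] (s : G) (v : ↥(fixV π H)) :
    (quotRep π H).op (QuotientGroup.mk s) v = Lop π H s v := rfl

/-- Orthogonal projection onto the complement of the fixed subspace. -/
noncomputable def PW : π.space →L[ℂ] ↥(fixV π H)ᗮ := Submodule.orthogonalProjectionOnto (fixV π H)ᗮ

theorem PW_fix_zero {x : π.space} (hx : x ∈ fixV π H) : PW π H x = 0 :=
  (Submodule.orthogonalProjectionOnto_eq_zero_iff).2 (Submodule.le_orthogonal_orthogonal _ hx)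

theorem sub_PW_mem (x : π.space) : x - ↑(PW π H x) ∈ fixV π H := by
  have := Submodule.sub_starProjection_mem_orthogonal (K := (fixV π H)ᗮ) x
  rwa [Submodule.orthogonal_orthogonal] at this

theorem PW_key {h : G} (hh : h ∈ H) (x : π.space) :
    PW π H (π.op h x) = PW π H (π.op h ↑(PW π H x)) := by
  conv_lhs => rw [show x = (x - ↑(PW π H x)) + ↑(PW π H x) by abel]
  rw [map_add (π.op h), map_add (PW π H), (sub_PW_mem π H x) h hh,
    PW_fix_zero π H (sub_PW_mem π H x), zero_add]

/-- The compression of `π` restricted to `H` on the orthogonal complement of the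
fixed subspace. -/
noncomputable def Sop (h : ↥H) : ↥(fixV π H)ᗮ →L[ℂ] ↥(fixV π H)ᗮ :=
  (PW π H).comp ((π.op ↑h).comp ((fixV π H)ᗮ).subtypeL)

@[simp] theorem Sop_apply (h : ↥H) (w : ↥(fixV π H)ᗮ) :
    Sop π H h w = PW π H (π.op ↑h ↑w) := rfl

theorem Sop_Sop (h h' : ↥H) (w : ↥(fixV π H)ᗮ) :
    Sop π H h (Sop π H h' w) = PW π H (π.op ↑h (π.op ↑h' ↑w)) := by
  rw [Sop_apply, Sop_apply, ← PW_key π H h.2]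

/-- The compression as a homomorphism to units. -/
noncomputable def subHom : ↥H →* (↥(fixV π H)ᗮ →L[ℂ] ↥(fixV π H)ᗮ)ˣ where
  toFun h :=
    { val := Sop π H h
      inv := Sop π H h⁻¹
      val_inv := by
        ext w
        have key : Sop π H h (Sop π H h⁻¹ w) = w := by
          rw [Sop_Sop]
          simp only [Subgroup.coe_inv, op_inv_apply]
          exact Submodule.orthogonalProjectionOnto_mem_subspace_eq_self w
        simp only [ContinuousLinearMap.mul_apply, ContinuousLinearMap.one_apply]
        exact congrArg Subtype.val key
      inv_val := by
        ext w
        have key : Sop π H h⁻¹ (Sop π H h w) = w := by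
          rw [Sop_Sop]
          simp only [Subgroup.coe_inv, op_inv_apply']
          exact Submodule.orthogonalProjectionOnto_mem_subspace_eq_self w
        simp only [ContinuousLinearMap.mul_apply, ContinuousLinearMap.one_apply]
        exact congrArg Subtype.val key }
  map_one' := Units.ext (by
    ext w
    have key : Sop π H 1 w = w := by
      rw [Sop_apply]
      simp only [OneMemClass.coe_one, op_one_apply]
      exact Submodule.orthogonalProjectionOnto_mem_subspace_eq_self w
    simp only [ContinuousLinearMap.one_apply]
    exact congrArg Subtype.val key)
  map_mul' h h' := Units.ext (by
    ext w
    have key : Sop π H (h * h') w = Sop π H h (Sop π H h' w) := by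
      rw [Sop_Sop, Sop_apply, Subgroup.coe_mul, op_mul_apply]
    simp only [ContinuousLinearMap.mul_apply]
    exact congrArg Subtype.val key)

/-- The compression representation of `H` on the orthogonal complement. -/
noncomputable def subRep : HilbRep.{u, v} ↥H where
  space := ↥(fixV π H)ᗮ
  toFun := subHom π H

@[simp] theorem subRep_op (h : ↥H) (w : ↥(fixV π H)ᗮ) :
    (subRep π H).op h w = PW π H (π.op ↑h ↑w) := rfl

end Fixed

set_option maxHeartbeats 1600000 in
/-- If both the quotient and the (normal) subgroup have Property (T)_c, so does the group. -/
theorem propertyT_of_quotient_and_subgroup [IsTopologicalGroup G] [LocallyCompactSpace G]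
    (H : Subgroup G) [H.Normal] {c : ℝ} (hc : 1 ≤ c)
    (hTq : HasPropertyT.{u, v} (G ⧸ H) c) (hTh : HasPropertyT.{u, v} ↥H c) :
    HasPropertyT.{u, v} G c := by
  intro π hRc hAlm
  obtain ⟨hUB, hSOT⟩ := hRc
  have hc0 : (0 : ℝ) ≤ c := zero_le_one.trans hc
  have hople : ∀ (s : G) (x : π.space), ‖π.op s x‖ ≤ c * ‖x‖ := fun s x =>
    ((π.op s).le_opNorm x).trans (mul_le_mul_of_nonneg_right (hUB s) (norm_nonneg x))
  have hPWle : ∀ x : π.space, ‖PW π H x‖ ≤ ‖x‖ := fun x => by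
    calc ‖PW π H x‖ ≤ ‖PW π H‖ * ‖x‖ := (PW π H).le_opNorm x
    _ ≤ 1 * ‖x‖ := by
        gcongr
        exact Submodule.orthogonalProjectionOnto_norm_le _
    _ = ‖x‖ := one_mul _
  -- the compression representation is in R_c(H)
  have hsubRc : (subRep π H).IsRc c := by
    constructor
    · intro h
      show ‖Sop π H h‖ ≤ c
      refine ContinuousLinearMap.opNorm_le_bound _ hc0 fun w => ?_
      calc ‖Sop π H h w‖ = ‖PW π H (π.op ↑h ↑w)‖ := rfl
      _ ≤ ‖π.op ↑h (↑w : π.space)‖ := hPWle _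
      _ ≤ c * ‖(↑w : π.space)‖ := hople _ _
      _ = c * ‖w‖ := rfl
    · intro w
      change ↥(fixV π H)ᗮ at w
      show Continuous fun h : ↥H => PW π H (π.op (↑h) ↑w)
      exact (PW π H).continuous.comp ((hSOT ↑w).comp continuous_subtype_val)
  -- the compression representation has no invariant vectors
  have hnoinv : ¬ (subRep π H).HasInvariantVector := by
    rintro ⟨w, hw0, hwfix⟩
    change ↥(fixV π H)ᗮ at w
    have hwfix' : ∀ h : ↥H, PW π H (π.op ↑h ↑w) = w := fun h => hwfix h
    have hdmem : ∀ h : ↥H, π.op ↑h ↑w - ↑w ∈ fixV π H := fun h => by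
      have h1 := sub_PW_mem π H (π.op ↑h ↑w)
      rwa [hwfix' h] at h1
    have hiter : ∀ (h : ↥H) (n : ℕ),
        π.op ((↑h : G) ^ n) ↑w = ↑w + (n : ℂ) • (π.op ↑h ↑w - ↑w) := by
      intro h n
      induction n with
      | zero => simp [op_one_apply]
      | succ n ih =>
        have hps : ((↑h : G)) ^ (n + 1) = ↑h * (↑h : G) ^ n := by
          rw [pow_succ']
        rw [hps, op_mul_apply, ih, map_add, ContinuousLinearMap.map_smul,
          hdmem h ↑h h.2]
        have hop : π.op ↑h ↑w = ↑w + (π.op ↑h ↑w - ↑w) := by abel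
        rw [hop]
        push_cast
        rw [add_smul, one_smul]
        abel
    have hdzero : ∀ h : ↥H, π.op ↑h ↑w = ↑w := by
      intro h
      by_contra hne
      have hdpos : 0 < ‖π.op ↑h ↑w - ↑w‖ := norm_pos_iff.2 (sub_ne_zero.2 hne)
      obtain ⟨n, hn⟩ := exists_nat_gt ((c + 1) * ‖(↑w : π.space)‖ / ‖π.op ↑h ↑w - ↑w‖)
      have hb : (n : ℝ) * ‖π.op ↑h ↑w - ↑w‖ ≤ (c + 1) * ‖(↑w : π.space)‖ := by
        have h1 : ‖((n : ℂ)) • (π.op ↑h ↑w - ↑w)‖ = (n : ℝ) * ‖π.op ↑h ↑w - ↑w‖ := by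
          rw [norm_smul]
          norm_num
        have h2 : ((n : ℂ)) • (π.op ↑h ↑w - ↑w) = π.op ((↑h : G) ^ n) ↑w - ↑w := by
          rw [hiter h n]; abel
        calc (n : ℝ) * ‖π.op ↑h ↑w - ↑w‖ = ‖π.op ((↑h : G) ^ n) ↑w - ↑w‖ := by rw [← h1, h2]
        _ ≤ ‖π.op ((↑h : G) ^ n) ↑w‖ + ‖(↑w : π.space)‖ := norm_sub_le _ _
        _ ≤ c * ‖(↑w : π.space)‖ + ‖(↑w : π.space)‖ := by
            have := hople ((↑h : G) ^ n) ↑w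
            linarith
        _ = (c + 1) * ‖(↑w : π.space)‖ := by ring
      have := (div_lt_iff₀ hdpos).1 hn
      linarith
    have hwV : (↑w : π.space) ∈ fixV π H := fun h hh => hdzero ⟨h, hh⟩
    have hw0' : (↑w : π.space) = 0 := by
      have hin : (↑w : π.space) ∈ (fixV π H) ⊓ (fixV π H)ᗮ := ⟨hwV, w.2⟩
      rwa [disjoint_iff.1 (Submodule.orthogonal_disjoint (fixV π H)), Submodule.mem_bot] at hin
    exact hw0 (Subtype.ext hw0')
  -- so it cannot almost have invariant vectors
  have hnoalm : ¬ (subRep π H).AlmostInvariantVectors := fun h => hnoinv (hTh _ hsubRc h)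
  rw [HilbRep.AlmostInvariantVectors] at hnoalm
  push_neg at hnoalm
  obtain ⟨QH, hQHc, ε₀, hε₀, hfar0⟩ := hnoalm
  have hfar : ∀ w : ↥(fixV π H)ᗮ, ∃ s ∈ QH, ε₀ * ‖w‖ ≤ ‖Sop π H s w - w‖ := hfar0
  -- the quotient representation is in R_c(G/H)
  have hqRc : (quotRep π H).IsRc c := by
    constructor
    · intro t
      refine QuotientGroup.induction_on t fun s => ?_
      show ‖Lop π H s‖ ≤ c
      refine ContinuousLinearMap.opNorm_le_bound _ hc0 fun v => ?_
      calc ‖Lop π H s v‖ = ‖π.op s (↑v : π.space)‖ := rfl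
      _ ≤ c * ‖(↑v : π.space)‖ := hople _ _
      _ = c * ‖v‖ := rfl
    · intro v
      change ↥(fixV π H) at v
      rw [(QuotientGroup.isQuotientMap_mk H).continuous_iff]
      show Continuous fun s : G => Lop π H s v
      exact Continuous.subtype_mk (hSOT ↑v) _
  -- it almost has invariant vectors
  have hqAlm : (quotRep π H).AlmostInvariantVectors := by
    intro Qbar hQbar ε hε
    obtain ⟨Q, hQc, hQsub⟩ := exists_isCompact_subset_image H hQbar
    have hden : (0 : ℝ) < ε₀ + c + 1 := by linarith
    set δ : ℝ := min (ε₀ / 2) (ε * ε₀ / (2 * (ε₀ + c + 1))) with hδdef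
    have hδ1 : δ ≤ ε₀ / 2 := min_le_left _ _
    have hδ2 : δ ≤ ε * ε₀ / (2 * (ε₀ + c + 1)) := min_le_right _ _
    have hδpos : 0 < δ := lt_min (by linarith) (by positivity)
    have hKc : IsCompact ((Q ∪ Subtype.val '' QH) ∪ {1}) :=
      (hQc.union (hQHc.image continuous_subtype_val)).union isCompact_singleton
    obtain ⟨ξ, hξ⟩ := hAlm _ hKc δ hδpos
    have hξpos : 0 < ‖ξ‖ := by
      have h1 := hξ 1 (Or.inr rfl)
      rw [op_one_apply, sub_self, norm_zero] at h1
      nlinarith [norm_nonneg ξ]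
    set w : ↥(fixV π H)ᗮ := PW π H ξ with hwdef
    obtain ⟨h, hhQH, hfarh⟩ := hfar w
    have hsub1 : ‖Sop π H h w - w‖ < δ * ‖ξ‖ := by
      have heq : Sop π H h w - w = PW π H (π.op ↑h ξ - ξ) := by
        rw [Sop_apply, map_sub (PW π H), hwdef, ← PW_key π H h.2 ξ]
      rw [heq]
      exact (hPWle _).trans_lt (hξ ↑h (Or.inl (Or.inr ⟨h, hhQH, rfl⟩)))
    have hwb : ε₀ * ‖w‖ < δ * ‖ξ‖ := lt_of_le_of_lt hfarh hsub1
    have hwn : ‖w‖ = ‖(↑w : π.space)‖ := rfl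
    set x : π.space := ξ - ↑w with hxdef
    have hvV : x ∈ fixV π H := sub_PW_mem π H ξ
    have hxlb : ‖ξ‖ - ‖(↑w : π.space)‖ ≤ ‖x‖ := by
      have := norm_sub_norm_le ξ (↑w : π.space)
      simpa [hxdef] using this
    have hwsmall : ‖(↑w : π.space)‖ < ‖ξ‖ / 2 := by
      rw [← hwn]
      nlinarith
    have hxpos : ‖ξ‖ / 2 < ‖x‖ := by linarith
    refine ⟨(⟨x, hvV⟩ : ↥(fixV π H)), fun t ht => ?_⟩
    obtain ⟨q, hq, rfl⟩ := hQsub ht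
    have key : ‖π.op q x - x‖ < ε * ‖x‖ := by
      have e1 : π.op q x - x = (π.op q ξ - ξ) - (π.op q ↑w - ↑w) := by
        rw [hxdef, map_sub]
        abel
      have b1 : ‖π.op q ξ - ξ‖ < δ * ‖ξ‖ := hξ q (Or.inl (Or.inl hq))
      have b2 : ‖π.op q (↑w : π.space) - ↑w‖ ≤ (c + 1) * ‖(↑w : π.space)‖ := by
        have := hople q (↑w : π.space)
        have := norm_sub_le (π.op q (↑w : π.space)) (↑w : π.space)
        linarith
      have b3 : ‖π.op q x - x‖ < δ * ‖ξ‖ + (c + 1) * ‖(↑w : π.space)‖ := by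
        rw [e1]
        calc ‖(π.op q ξ - ξ) - (π.op q ↑w - ↑w)‖
            ≤ ‖π.op q ξ - ξ‖ + ‖π.op q (↑w : π.space) - ↑w‖ := norm_sub_le _ _
        _ < δ * ‖ξ‖ + (c + 1) * ‖(↑w : π.space)‖ := by
            have hcp : (0 : ℝ) < c + 1 := by linarith
            nlinarith
      -- arithmetic: δ‖ξ‖ + (c+1)‖w‖ < ε‖x‖
      have harith : δ * ‖ξ‖ + (c + 1) * ‖(↑w : π.space)‖ < ε * ‖x‖ := by
        have hwb' : ε₀ * ‖(↑w : π.space)‖ < δ * ‖ξ‖ := by rw [← hwn]; exact hwb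
        have h2den : (0 : ℝ) < 2 * (ε₀ + c + 1) := by linarith
        have hδ2' : δ * (2 * (ε₀ + c + 1)) ≤ ε * ε₀ := by
          have hmm := mul_le_mul_of_nonneg_right hδ2 (le_of_lt h2den)
          rwa [div_mul_cancel₀ _ (ne_of_gt h2den)] at hmm
        have hcle : (0 : ℝ) < c + 1 := by linarith
        have hA : (c + 1) * (ε₀ * ‖(↑w : π.space)‖) < (c + 1) * (δ * ‖ξ‖) :=
          mul_lt_mul_of_pos_left hwb' hcle
        have hB : δ * (2 * (ε₀ + c + 1)) * ‖ξ‖ ≤ ε * ε₀ * ‖ξ‖ :=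
          mul_le_mul_of_nonneg_right hδ2' (norm_nonneg ξ)
        have hC : ε * ε₀ * (‖ξ‖ / 2) < ε * ε₀ * ‖x‖ :=
          mul_lt_mul_of_pos_left hxpos (mul_pos hε hε₀)
        have final : ε₀ * (δ * ‖ξ‖ + (c + 1) * ‖(↑w : π.space)‖) < ε₀ * (ε * ‖x‖) := by
          linarith [hA, hB, hC]
        exact lt_of_mul_lt_mul_left final (le_of_lt hε₀)
      linarith
    have h1 : ‖Lop π H q ⟨x, hvV⟩ - (⟨x, hvV⟩ : ↥(fixV π H))‖ = ‖π.op q x - x‖ := rfl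
    have h2 : ‖(⟨x, hvV⟩ : ↥(fixV π H))‖ = ‖x‖ := rfl
    show ‖Lop π H q ⟨x, hvV⟩ - (⟨x, hvV⟩ : ↥(fixV π H))‖ < ε * ‖(⟨x, hvV⟩ : ↥(fixV π H))‖
    rw [h1, h2]
    exact key
  obtain ⟨ζ, hζ0, hζfix⟩ := hTq (quotRep π H) hqRc hqAlm
  change ↥(fixV π H) at ζ
  have hζfix' : ∀ s : G, Lop π H s ζ = ζ := fun s => hζfix (QuotientGroup.mk s)
  refine ⟨(↑ζ : π.space), fun h0 => hζ0 (Subtype.ext h0), fun s => ?_⟩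
  exact congrArg Subtype.val (hζfix' s)

/-- Monotonicity of Property (T)_c. -/
theorem propertyT_mono {c c' : ℝ} (h : HasPropertyT.{u, v} G c) (hle : c' ≤ c) :
    HasPropertyT.{u, v} G c' := fun π hRc hA =>
  h π ⟨fun s => (hRc.1 s).trans hle, hRc.2⟩ hA

theorem le_cUB {c : ℝ} (hc : 1 ≤ c) (hT : HasPropertyT.{u, v} G c) :
    ENNReal.ofReal c ≤ cUB.{u, v} G := by
  unfold cUB
  rw [if_pos (propertyT_mono hT hc)]
  exact le_iSup₂ (f := fun (c : ℝ) (_ : 1 ≤ c ∧ HasPropertyT.{u, v} G c) =>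
    ENNReal.ofReal c) c ⟨hc, hT⟩

theorem exists_propertyT_of_lt_cUB {a : ℝ≥0∞} (h1 : 1 ≤ a) (h : a < cUB.{u, v} G) :
    ∃ c : ℝ, 1 ≤ c ∧ HasPropertyT.{u, v} G c ∧ a < ENNReal.ofReal c := by
  unfold cUB at h
  split_ifs at h with hT
  · rw [lt_iSup_iff] at h
    obtain ⟨c, hc⟩ := h
    rw [lt_iSup_iff] at hc
    obtain ⟨⟨hc1, hTc⟩, hlt⟩ := hc
    exact ⟨c, hc1, hTc, hlt⟩
  · exact absurd (lt_of_le_of_lt h1 h) (lt_irrefl _)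

theorem one_le_cUB : 1 ≤ cUB.{u, v} G := by
  unfold cUB
  split_ifs with h
  · have : ENNReal.ofReal (1 : ℝ) ≤
        ⨆ (c : ℝ) (_ : 1 ≤ c ∧ HasPropertyT.{u, v} G c), ENNReal.ofReal c :=
      le_iSup₂ (f := fun (c : ℝ) (_ : 1 ≤ c ∧ HasPropertyT.{u, v} G c) => ENNReal.ofReal c)
        1 ⟨le_refl 1, h⟩
    simpa using this
  · exact le_rfl

end CUBAux

theorem cUB_quotient_sandwich {G : Type u} [Group G] [TopologicalSpace G] [IsTopologicalGroup G]
    [LocallyCompactSpace G] (H : Subgroup G) [H.Normal] (hH : IsClosed (H : Set G)) :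
    min (cUB.{u, v} (G ⧸ H)) (cUB.{u, v} ↥H) ≤ cUB.{u, v} G ∧
      cUB.{u, v} G ≤ cUB.{u, v} (G ⧸ H) := by
  constructor
  · -- min(cUB(G/H), cUB(H)) ≤ cUB(G)
    by_contra hlt
    push_neg at hlt
    have h1 : (1 : ℝ≥0∞) ≤ cUB.{u, v} G := CUBAux.one_le_cUB
    have hltq : cUB.{u, v} G < cUB.{u, v} (G ⧸ H) := lt_of_lt_of_le hlt (min_le_left _ _)
    have hlth : cUB.{u, v} G < cUB.{u, v} ↥H := lt_of_lt_of_le hlt (min_le_right _ _)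
    obtain ⟨c₁, hc₁1, hTc₁, hlt₁⟩ := CUBAux.exists_propertyT_of_lt_cUB h1 hltq
    obtain ⟨c₂, hc₂1, hTc₂, hlt₂⟩ := CUBAux.exists_propertyT_of_lt_cUB h1 hlth
    set c : ℝ := min c₁ c₂ with hcdef
    have hc1 : 1 ≤ c := le_min hc₁1 hc₂1
    have hTq : HasPropertyT.{u, v} (G ⧸ H) c :=
      CUBAux.propertyT_mono hTc₁ (min_le_left _ _)
    have hTh : HasPropertyT.{u, v} ↥H c :=
      CUBAux.propertyT_mono hTc₂ (min_le_right _ _)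
    have hTG : HasPropertyT.{u, v} G c :=
      CUBAux.propertyT_of_quotient_and_subgroup H hc1 hTq hTh
    have hle : ENNReal.ofReal c ≤ cUB.{u, v} G := CUBAux.le_cUB hc1 hTG
    have hltc : cUB.{u, v} G < ENNReal.ofReal c := by
      rcases min_cases c₁ c₂ with ⟨hmin, -⟩ | ⟨hmin, -⟩
      · rw [hcdef, hmin]; exact hlt₁
      · rw [hcdef, hmin]; exact hlt₂
    exact absurd (lt_of_lt_of_le hltc hle) (lt_irrefl _)
  · -- cUB(G) ≤ cUB(G/H)
    by_cases hG1 : HasPropertyT.{u, v} G 1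
    · have hq1 : HasPropertyT.{u, v} (G ⧸ H) 1 := CUBAux.propertyT_quotient H hG1
      unfold cUB
      rw [if_pos hG1, if_pos hq1]
      refine iSup₂_le fun c hc => ?_
      exact le_iSup₂ (f := fun (c : ℝ) (_ : 1 ≤ c ∧ HasPropertyT.{u, v} (G ⧸ H) c) =>
        ENNReal.ofReal c) c ⟨hc.1, CUBAux.propertyT_quotient H hc.2⟩
    · have hG : cUB.{u, v} G = 1 := by
        unfold cUB
        rw [if_neg hG1]
      rw [hG]
      exact CUBAux.one_le_cUB
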